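/- (Deterministic form of Lemma 3.2: a low-distortion embedding preserves the maximum KDE value.) Let n ≥ 1, d, m ≥ 1, 0 < ε ≤ 1, 0 < ρ ≤ 1, and set γ = ε/(4·log(4/(ερ))). Let p₁,…,pₙ ∈ ℝ^d and let x* ∈ ℝ^d satisfy G_P(x*) ≥ nρ and G_P(y) ≤ G_P(x*) for all y ∈ ℝ^d. Let x' ∈ ℝ^m and q₁,…,qₙ ∈ ℝ^m be such that for every pair u, v among {x*, p₁, …, pₙ}, with corresponding images u', v' among {x', q₁, …, qₙ}, one has ‖u − v‖² ≤ ‖u' − v'‖² ≤ (1+γ)·‖u − v‖². Then: (i) G_Q(x') ≥ (1 − ε/2)·G_P(x*), and (ii) G_Q(y) ≤ G_P(x*) for every y ∈ ℝ^m. -/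

import Mathlib

open scoped BigOperators

private lemma auxA' {F : Type*} [NormedAddCommGroup F] [InnerProductSpace ℝ F]
    {n : ℕ} (c : Fin n → ℝ) (hc1 : ∑ i, c i = 1) (v : Fin n → F) (w : F) :
    ∑ i, c i * ‖w - v i‖ ^ 2
      = (∑ i, c i * ‖v i‖ ^ 2 - ‖∑ i, c i • v i‖ ^ 2) + ‖w - ∑ i, c i • v i‖ ^ 2 := by
  have h : ∀ x y : F, ‖x - y‖ ^ 2 = ‖x‖ ^ 2 - 2 * (inner ℝ x y : ℝ) + ‖y‖ ^ 2 :=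
    fun x y => norm_sub_sq_real x y
  simp only [h]
  have hinner : (inner ℝ w (∑ i, c i • v i) : ℝ) = ∑ i, c i * inner ℝ w (v i) := by
    rw [inner_sum]; simp [real_inner_smul_right]
  simp only [mul_add, mul_sub, Finset.sum_add_distrib, Finset.sum_sub_distrib,
    ← Finset.sum_mul, hc1, hinner, Finset.mul_sum]
  ring_nf

private lemma auxB' {F : Type*} [NormedAddCommGroup F] [InnerProductSpace ℝ F]
    {n : ℕ} (c : Fin n → ℝ) (hc1 : ∑ i, c i = 1) (v : Fin n → F) :
    ∑ i, ∑ j, c i * c j * ‖v i - v j‖ ^ 2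
      = 2 * (∑ i, c i * ‖v i‖ ^ 2 - ‖∑ i, c i • v i‖ ^ 2) := by
  have h : ∀ j, ∑ i, c i * c j * ‖v i - v j‖ ^ 2 = c j * ∑ i, c i * ‖v j - v i‖ ^ 2 := by
    intro j
    rw [Finset.mul_sum]
    apply Finset.sum_congr rfl
    intro i _
    rw [norm_sub_rev]; ring
  calc ∑ i, ∑ j, c i * c j * ‖v i - v j‖ ^ 2
      = ∑ j, ∑ i, c i * c j * ‖v i - v j‖ ^ 2 := Finset.sum_comm
    _ = ∑ j, c j * ((∑ i, c i * ‖v i‖ ^ 2 - ‖∑ i, c i • v i‖ ^ 2) + ‖v j - ∑ i, c i • v i‖ ^ 2) := by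
        simp only [h]
        exact Finset.sum_congr rfl fun j _ => by rw [auxA' c hc1 v (v j)]
    _ = 2 * (∑ i, c i * ‖v i‖ ^ 2 - ‖∑ i, c i • v i‖ ^ 2) := by
        simp only [mul_add, Finset.sum_add_distrib, ← Finset.sum_mul, hc1, one_mul]
        have := auxA' c hc1 v (∑ i, c i • v i)
        simp only [sub_self, norm_zero, ne_eq, OfNat.ofNat_ne_zero, not_false_eq_true,
          zero_pow, add_zero] at this
        have e : ∑ j, c j * ‖v j - ∑ i, c i • v i‖ ^ 2
            = ∑ i, c i * ‖v i‖ ^ 2 - ‖∑ i, c i • v i‖ ^ 2 := by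
          rw [← this]
          exact Finset.sum_congr rfl fun j _ => by rw [norm_sub_rev]
        rw [e]; ring

set_option maxHeartbeats 1000000 in
theorem stmt_17 (n d m : ℕ) (hn : 1 ≤ n) (hd : 1 ≤ d) (hm : 1 ≤ m)
    (ε ρ : ℝ) (hε0 : 0 < ε) (hε1 : ε ≤ 1) (hρ0 : 0 < ρ) (hρ1 : ρ ≤ 1)
    (γ : ℝ) (hγ : γ = ε / (4 * Real.log (4 / (ε * ρ))))
    (p : Fin n → EuclideanSpace ℝ (Fin d)) (xstar : EuclideanSpace ℝ (Fin d))
    (hρbound : (n : ℝ) * ρ ≤ ∑ i, Real.exp (-‖xstar - p i‖ ^ 2))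
    (hmax : ∀ y : EuclideanSpace ℝ (Fin d),
      ∑ i, Real.exp (-‖y - p i‖ ^ 2) ≤ ∑ i, Real.exp (-‖xstar - p i‖ ^ 2))
    (q : Fin n → EuclideanSpace ℝ (Fin m)) (x' : EuclideanSpace ℝ (Fin m))
    (hdist : ∀ o₁ o₂ : Option (Fin n),
      ‖o₁.elim xstar p - o₂.elim xstar p‖ ^ 2 ≤ ‖o₁.elim x' q - o₂.elim x' q‖ ^ 2 ∧
      ‖o₁.elim x' q - o₂.elim x' q‖ ^ 2 ≤ (1 + γ) * ‖o₁.elim xstar p - o₂.elim xstar p‖ ^ 2) :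
    (∑ i, Real.exp (-‖x' - q i‖ ^ 2) ≥ (1 - ε / 2) * ∑ i, Real.exp (-‖xstar - p i‖ ^ 2)) ∧
      ∀ y : EuclideanSpace ℝ (Fin m),
        ∑ i, Real.exp (-‖y - q i‖ ^ 2) ≤ ∑ i, Real.exp (-‖xstar - p i‖ ^ 2) := by
  haveI : NeZero n := ⟨Nat.one_le_iff_ne_zero.mp hn⟩
  have hερ : 0 < ε * ρ := mul_pos hε0 hρ0
  have hερ1 : ε * ρ ≤ 1 := by nlinarith
  set L : ℝ := Real.log (4 / (ε * ρ)) with hL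
  have hL0 : 0 < L := Real.log_pos (by rw [lt_div_iff₀ hερ]; linarith)
  have hγ0 : 0 ≤ γ := by rw [hγ]; positivity
  have hγL : γ * L = ε / 4 := by rw [hγ]; field_simp
  have hexpL : Real.exp (-L) = ε * ρ / 4 := by
    rw [hL, ← Real.log_inv, Real.exp_log (by positivity)]
    field_simp
  set G : ℝ := ∑ i, Real.exp (-‖xstar - p i‖ ^ 2) with hG
  constructor
  · -- part (i)
    have hterm : ∀ i : Fin n, Real.exp (-‖x' - q i‖ ^ 2)
        ≥ (1 - ε / 4) * Real.exp (-‖xstar - p i‖ ^ 2) - ε * ρ / 4 := by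
      intro i
      set t : ℝ := ‖xstar - p i‖ ^ 2 with ht
      have ht0 : 0 ≤ t := by positivity
      have h2' := (hdist none (some i)).2
      simp only [Option.elim] at h2'
      have h2 : ‖x' - q i‖ ^ 2 ≤ (1 + γ) * t := by rw [ht]; exact h2'
      have hle : Real.exp (-‖x' - q i‖ ^ 2) ≥ Real.exp (-((1 + γ) * t)) :=
        Real.exp_le_exp.mpr (by linarith)
      rcases le_or_gt t L with hcase | hcase
      · have h3 : Real.exp (-((1 + γ) * t)) = Real.exp (-t) * Real.exp (-(γ * t)) := by
          rw [← Real.exp_add]; ring_nf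
        have h4 : 1 - γ * t ≤ Real.exp (-(γ * t)) := by
          have := Real.add_one_le_exp (-(γ * t)); linarith
        have h5 : 1 - ε / 4 ≤ 1 - γ * t := by
          have : γ * t ≤ γ * L := mul_le_mul_of_nonneg_left hcase hγ0
          rw [hγL] at this; linarith
        have h6 : (1 - ε / 4) * Real.exp (-t) ≤ Real.exp (-((1 + γ) * t)) := by
          rw [h3]
          have := Real.exp_pos (-t)
          nlinarith [Real.exp_pos (-(γ * t))]
        nlinarith [Real.exp_pos (-‖x' - q i‖ ^ 2)]
      · have h7 : Real.exp (-t) ≤ ε * ρ / 4 := by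
          rw [← hexpL]; exact Real.exp_le_exp.mpr (by linarith)
        have h8 : (1 - ε / 4) * Real.exp (-t) - ε * ρ / 4 ≤ 0 := by
          nlinarith [Real.exp_pos (-t)]
        have := Real.exp_pos (-‖x' - q i‖ ^ 2)
        linarith
    calc ∑ i, Real.exp (-‖x' - q i‖ ^ 2)
        ≥ ∑ i, ((1 - ε / 4) * Real.exp (-‖xstar - p i‖ ^ 2) - ε * ρ / 4) :=
          Finset.sum_le_sum fun i _ => hterm i
      _ = (1 - ε / 4) * G - (n : ℝ) * (ε * ρ / 4) := by
          rw [Finset.sum_sub_distrib, ← Finset.mul_sum]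
          simp [hG]
      _ ≥ (1 - ε / 2) * G := by nlinarith
  · -- part (ii)
    intro y
    set S : ℝ := ∑ i, Real.exp (-‖y - q i‖ ^ 2) with hS
    have hSpos : 0 < S := Finset.sum_pos (fun i _ => Real.exp_pos _) Finset.univ_nonempty
    set c : Fin n → ℝ := fun i => Real.exp (-‖y - q i‖ ^ 2) / S with hc
    have hc0 : ∀ i, 0 ≤ c i := fun i => div_nonneg (Real.exp_pos _).le hSpos.le
    have hc1 : ∑ i, c i = 1 := by
      simp only [hc, ← Finset.sum_div]
      exact div_self hSpos.ne'
    set x : EuclideanSpace ℝ (Fin d) := ∑ i, c i • p i with hx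
    set z : EuclideanSpace ℝ (Fin m) := ∑ i, c i • q i with hz
    have key : ∑ i, c i * ‖x - p i‖ ^ 2 ≤ ∑ i, c i * ‖y - q i‖ ^ 2 := by
      have e1 : ∑ i, c i * ‖x - p i‖ ^ 2 = ∑ i, c i * ‖p i‖ ^ 2 - ‖x‖ ^ 2 := by
        rw [auxA' c hc1 p x, hx]; simp
      have e2 : ∑ i, c i * ‖y - q i‖ ^ 2
          = (∑ i, c i * ‖q i‖ ^ 2 - ‖z‖ ^ 2) + ‖y - z‖ ^ 2 := auxA' c hc1 q y
      have hBp := auxB' c hc1 p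
      have hBq := auxB' c hc1 q
      have hmono : ∑ i, ∑ j, c i * c j * ‖p i - p j‖ ^ 2
          ≤ ∑ i, ∑ j, c i * c j * ‖q i - q j‖ ^ 2 := by
        apply Finset.sum_le_sum; intro i _
        apply Finset.sum_le_sum; intro j _
        have h := (hdist (some i) (some j)).1
        simp only [Option.elim] at h
        exact mul_le_mul_of_nonneg_left h (mul_nonneg (hc0 i) (hc0 j))
      linarith [sq_nonneg ‖y - z‖]
    have hjensen : S ≤ ∑ i, Real.exp (-‖x - p i‖ ^ 2) := by
      set a : Fin n → ℝ := fun i => ‖y - q i‖ ^ 2 - ‖x - p i‖ ^ 2 with ha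
      have hsum_a : 0 ≤ ∑ i, c i * a i := by
        have : ∑ i, c i * a i = ∑ i, c i * ‖y - q i‖ ^ 2 - ∑ i, c i * ‖x - p i‖ ^ 2 := by
          rw [← Finset.sum_sub_distrib]
          exact Finset.sum_congr rfl fun i _ => by simp [ha]; ring
        linarith [key]
      have hconv := convexOn_exp.map_sum_le (t := Finset.univ) (w := c) (p := a)
        (fun i _ => hc0 i) hc1 (fun i _ => Set.mem_univ _)
      have h1 : (1 : ℝ) ≤ Real.exp (∑ i, c i • a i) := by
        rw [← Real.exp_zero]
        apply Real.exp_le_exp.mpr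
        simpa [smul_eq_mul] using hsum_a
      have h2 : ∀ i, c i * Real.exp (a i) = Real.exp (-‖x - p i‖ ^ 2) / S := by
        intro i
        rw [hc, div_mul_eq_mul_div, ← Real.exp_add]
        congr 2
        simp [ha]; ring
      have h3 : Real.exp (∑ i, c i • a i) ≤ (∑ i, Real.exp (-‖x - p i‖ ^ 2)) / S := by
        calc Real.exp (∑ i, c i • a i) ≤ ∑ i, c i * Real.exp (a i) := hconv
          _ = (∑ i, Real.exp (-‖x - p i‖ ^ 2)) / S := by
              rw [Finset.sum_div]; exact Finset.sum_congr rfl fun i _ => h2 i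
      have : (1 : ℝ) ≤ (∑ i, Real.exp (-‖x - p i‖ ^ 2)) / S := le_trans h1 h3
      calc S = 1 * S := (one_mul S).symm
        _ ≤ ((∑ i, Real.exp (-‖x - p i‖ ^ 2)) / S) * S :=
            mul_le_mul_of_nonneg_right this hSpos.le
        _ = ∑ i, Real.exp (-‖x - p i‖ ^ 2) := by field_simp
    exact le_trans hjensen (hmax x)
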